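/- Let L be a (d+1)-dimensional ℤ_p-Lie lattice with good basis (x₀,...,x_d) and matrix A (i.e., [x_i,x_j]=0 and [x₀,x_i]=Σ_l A_{li}x_l), and let M ⊆ L be a finite-index submodule with basis (y₀,...,y_d) whose change-of-basis matrix Ū = (U_{αβ}) (y_β = Σ_α U_{αβ}x_α) satisfies U_{0i} = 0 for all i ∈ {1,...,d}. Let U = (U_{ij})_{1 ≤ i,j ≤ d} and B = U₀₀ U^{−1} A U ∈ gl_d(ℚ_p). Then M is a Lie subalgebra of L if and only if B has all entries in ℤ_p, and in that case (y₀,...,y_d) is a good basis of M with matrix B. -/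

import Mathlib

lemma my_lie_sum {L : Type*} [LieRing L] {ι : Type*} (s : Finset ι) (x : L) (f : ι → L) :
    ⁅x, ∑ i ∈ s, f i⁆ = ∑ i ∈ s, ⁅x, f i⁆ :=
  map_sum (AddMonoidHom.mk' (fun y => ⁅x, y⁆) (lie_add x)) f s

lemma my_sum_lie {L : Type*} [LieRing L] {ι : Type*} (s : Finset ι) (x : L) (f : ι → L) :
    ⁅∑ i ∈ s, f i, x⁆ = ∑ i ∈ s, ⁅f i, x⁆ :=
  map_sum (AddMonoidHom.mk' (fun y => ⁅y, x⁆) (fun a b => add_lie a b x)) f s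

/-- Let `L` be a `(d+1)`-dimensional `ℤ_p`-Lie lattice with good basis
`(x₀,…,x_d)` and matrix `A`, and `M` a finite-index submodule with basis `(y₀,…,y_d)`
whose change-of-basis matrix `Ū` satisfies `U_{0i} = 0` for `i ∈ {1,…,d}`. With
`U = (U_{ij})_{1≤i,j≤d}` and `B = U₀₀ U⁻¹ A U` over `ℚ_p`: `M` is a Lie subalgebra
iff `B` has entries in `ℤ_p`, and in that case `(y₀,…,y_d)` is a good basis of `M`
with matrix `B`. -/
theorem stmt_13 (p : ℕ) [Fact p.Prime] (d : ℕ)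
    (L : Type*) [LieRing L] [LieAlgebra ℤ_[p] L]
    (b : Module.Basis (Fin (d + 1)) ℤ_[p] L)
    (A : Matrix (Fin d) (Fin d) ℤ_[p])
    (hab : ∀ i j : Fin d, ⁅b i.succ, b j.succ⁆ = 0)
    (h0 : ∀ i : Fin d, ⁅b (0 : Fin (d + 1)), b i.succ⁆ = ∑ l : Fin d, A l i • b l.succ)
    (M : Submodule ℤ_[p] L)
    (hfin : 0 < Nat.card (L ⧸ M))
    (yb : Module.Basis (Fin (d + 1)) ℤ_[p] ↥M)
    (Ubar : Matrix (Fin (d + 1)) (Fin (d + 1)) ℤ_[p])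
    (hU : ∀ β, (yb β : L) = ∑ α, Ubar α β • b α)
    (hU0 : ∀ i : Fin d, Ubar 0 i.succ = 0)
    (B : Matrix (Fin d) (Fin d) ℚ_[p])
    (hB : B = (Ubar 0 0 : ℚ_[p]) •
      ((Matrix.of fun i j : Fin d => (Ubar i.succ j.succ : ℚ_[p]))⁻¹ *
        (A.map fun r => (r : ℚ_[p])) *
        (Matrix.of fun i j : Fin d => (Ubar i.succ j.succ : ℚ_[p])))) :
    ((∀ u ∈ M, ∀ v ∈ M, ⁅u, v⁆ ∈ M) ↔
        ∀ i j : Fin d, ∃ r : ℤ_[p], (r : ℚ_[p]) = B i j) ∧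
    (∀ B' : Matrix (Fin d) (Fin d) ℤ_[p], (B'.map fun r => (r : ℚ_[p])) = B →
      (∀ i j : Fin d, ⁅(yb i.succ : L), (yb j.succ : L)⁆ = 0) ∧
      ∀ i : Fin d, ⁅(yb (0 : Fin (d + 1)) : L), (yb i.succ : L)⁆ =
        ∑ l : Fin d, B' l i • (yb l.succ : L)) := by
  classical
  -- basic representation lemmas
  have hrep : ∀ β α, b.repr (yb β : L) α = Ubar α β := by
    intro β α
    rw [hU β]
    simp [Finsupp.single_apply, map_sum]
  have hrepy : ∀ (c : Fin (d+1) → ℤ_[p]) (α), b.repr (∑ β, c β • (yb β : L)) α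
      = ∑ β, c β * Ubar α β := by
    intro c α
    simp [map_sum, Finsupp.finset_sum_apply, hrep]
  have hrepb0 : ∀ (c : Fin d → ℤ_[p]), b.repr (∑ m, c m • b m.succ) 0 = 0 := by
    intro c
    simp [map_sum, Finsupp.single_apply, Fin.succ_ne_zero]
  have hrepbs : ∀ (c : Fin d → ℤ_[p]) (m : Fin d),
      b.repr (∑ m', c m' • b m'.succ) m.succ = c m := by
    intro c m
    simp [map_sum, Finsupp.single_apply, Fin.succ_inj]
  have hmem_iff : ∀ x : L, x ∈ M ↔ ∃ c : Fin (d+1) → ℤ_[p], x = ∑ β, c β • (yb β : L) := by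
    intro x
    constructor
    · intro hx
      refine ⟨fun β => yb.repr ⟨x, hx⟩ β, ?_⟩
      have h1 := yb.sum_repr ⟨x, hx⟩
      have h2 : ((∑ β, yb.repr ⟨x,hx⟩ β • yb β : M) : L)
          = ∑ β, yb.repr ⟨x,hx⟩ β • (yb β : L) := by simp [-Module.Basis.sum_repr]
      rw [← h2, h1]
    · rintro ⟨c, rfl⟩
      exact Submodule.sum_mem _ fun β _ => Submodule.smul_mem _ _ (SetLike.coe_mem _)
  -- finite index consequences
  have hnsmul : ∀ x : L, ((Nat.card (L ⧸ M) : ℤ_[p])) • x ∈ M := by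
    intro x
    rw [← Submodule.Quotient.mk_eq_zero]
    have h1 : (Submodule.Quotient.mk ((Nat.card (L ⧸ M) : ℤ_[p]) • x) : L ⧸ M)
        = (Nat.card (L ⧸ M) : ℤ_[p]) • (Submodule.Quotient.mk x) := by
      rw [Submodule.Quotient.mk_smul]
    rw [h1, Nat.cast_smul_eq_nsmul]
    exact card_nsmul_eq_zero'
  have hn0 : ((Nat.card (L ⧸ M) : ℤ_[p])) ≠ 0 := Nat.cast_ne_zero.2 hfin.ne'
  have hU00 : Ubar 0 0 ≠ 0 := by
    obtain ⟨c, hc⟩ := (hmem_iff _).1 (hnsmul (b 0))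
    have h1 := congrArg (fun z => b.repr z 0) hc
    simp only [hrepy] at h1
    rw [Fin.sum_univ_succ] at h1
    simp only [hU0, mul_zero, Finset.sum_const_zero, add_zero] at h1
    simp only [map_smul, Module.Basis.repr_self, Finsupp.smul_apply, Finsupp.single_apply] at h1
    intro h
    rw [h, mul_zero] at h1
    simp at h1
    exact hn0 (by simpa using h1)
  -- membership criterion
  have hmemC : ∀ c : Fin d → ℤ_[p], (∑ m, c m • b m.succ) ∈ M →
      ∃ z : Fin d → ℤ_[p], ∀ m, ∑ j, Ubar m.succ j.succ * z j = c m := by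
    intro c hx
    obtain ⟨c', hc'⟩ := (hmem_iff _).1 hx
    have h1 := congrArg (fun z => b.repr z 0) hc'
    simp only [hrepb0, hrepy] at h1
    rw [Fin.sum_univ_succ] at h1
    simp only [hU0, mul_zero, Finset.sum_const_zero, add_zero] at h1
    have hc0 : c' 0 = 0 := by
      rcases mul_eq_zero.1 h1.symm with h | h
      · exact h
      · exact absurd h hU00
    refine ⟨fun j => c' j.succ, fun m => ?_⟩
    have h2 := congrArg (fun z => b.repr z m.succ) hc'
    simp only [hrepbs, hrepy] at h2
    rw [Fin.sum_univ_succ, hc0, zero_mul, zero_add] at h2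
    rw [h2]
    exact Finset.sum_congr rfl fun j _ => mul_comm _ _
  -- determinant of U is nonzero
  have hdetU : (Matrix.of fun i j : Fin d => Ubar i.succ j.succ).det ≠ 0 := by
    have hCol : ∀ i : Fin d, ∃ z : Fin d → ℤ_[p],
        ∀ m, ∑ j, Ubar m.succ j.succ * z j
          = if m = i then ((Nat.card (L ⧸ M) : ℤ_[p])) else 0 := by
      intro i
      apply hmemC
      have h3 : (∑ m, (if m = i then ((Nat.card (L ⧸ M) : ℤ_[p])) else 0) • b m.succ)
          = ((Nat.card (L ⧸ M) : ℤ_[p])) • b i.succ := by simp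
      rw [h3]
      exact hnsmul _
    choose z hz using hCol
    have hmat : (Matrix.of fun i j : Fin d => Ubar i.succ j.succ) * (Matrix.of fun m i => z i m)
        = ((Nat.card (L ⧸ M) : ℤ_[p])) • (1 : Matrix (Fin d) (Fin d) ℤ_[p]) := by
      ext m i
      simp only [Matrix.mul_apply, Matrix.of_apply, Matrix.smul_apply, Matrix.one_apply,
        smul_eq_mul, mul_ite, mul_one, mul_zero]
      exact hz i m
    have h4 := congrArg Matrix.det hmat
    rw [Matrix.det_mul, Matrix.det_smul, Matrix.det_one, mul_one] at h4
    intro h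
    rw [h, zero_mul] at h4
    exact pow_ne_zero _ hn0 h4.symm
  have hmapU : (Matrix.of fun i j : Fin d => (Ubar i.succ j.succ : ℚ_[p]))
      = (PadicInt.Coe.ringHom (p := p)).mapMatrix
        (Matrix.of fun i j : Fin d => Ubar i.succ j.succ) := rfl
  have hdetUQ : IsUnit (Matrix.of fun i j : Fin d => (Ubar i.succ j.succ : ℚ_[p])).det := by
    rw [isUnit_iff_ne_zero, hmapU, ← RingHom.map_det]
    exact fun h => hdetU (Subtype.coe_injective h)
  have hkey : (Matrix.of fun i j : Fin d => (Ubar i.succ j.succ : ℚ_[p])) * B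
      = (Ubar 0 0 : ℚ_[p]) • ((A.map fun r => (r : ℚ_[p])) *
          (Matrix.of fun i j : Fin d => (Ubar i.succ j.succ : ℚ_[p]))) := by
    rw [hB, Matrix.mul_smul]
    congr 1
    rw [← Matrix.mul_assoc, ← Matrix.mul_assoc, Matrix.mul_nonsing_inv _ hdetUQ, Matrix.one_mul]
  have hkey' : ∀ m i : Fin d, ∑ l : Fin d, (Ubar m.succ l.succ : ℚ_[p]) * B l i
      = (Ubar 0 0 : ℚ_[p]) * ∑ j : Fin d, (A m j : ℚ_[p]) * (Ubar j.succ i.succ : ℚ_[p]) := by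
    intro m i
    have := congrFun (congrFun hkey m) i
    simpa [Matrix.mul_apply, Matrix.smul_apply, Matrix.map_apply, Finset.mul_sum] using this
  have hVecInj : ∀ v w : Fin d → ℚ_[p],
      (Matrix.of fun i j : Fin d => (Ubar i.succ j.succ : ℚ_[p])).mulVec v
        = (Matrix.of fun i j : Fin d => (Ubar i.succ j.succ : ℚ_[p])).mulVec w → v = w := by
    intro v w h
    have h2 := congrArg
      (fun t => (Matrix.of fun i j : Fin d => (Ubar i.succ j.succ : ℚ_[p]))⁻¹.mulVec t) h
    simpa [Matrix.mulVec_mulVec, Matrix.nonsing_inv_mul _ hdetUQ] using h2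
  have hcoesum : ∀ (f : Fin d → ℤ_[p]),
      ((∑ i : Fin d, f i : ℤ_[p]) : ℚ_[p]) = ∑ i : Fin d, (f i : ℚ_[p]) :=
    fun f => map_sum (PadicInt.Coe.ringHom (p := p)) f Finset.univ
  have hcast : ∀ (B' : Matrix (Fin d) (Fin d) ℤ_[p]), (B'.map fun r => (r : ℚ_[p])) = B →
      ∀ m i : Fin d, Ubar 0 0 * ∑ j : Fin d, A m j * Ubar j.succ i.succ
        = ∑ l : Fin d, Ubar m.succ l.succ * B' l i := by
    intro B' hB' m i
    have h3 := hkey' m i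
    rw [← hB'] at h3
    apply Subtype.coe_injective
    simp only [PadicInt.coe_mul, hcoesum]
    rw [← h3]
    simp [Matrix.map_apply]
  -- expansions of the basis of M
  have hysucc : ∀ i : Fin d, (yb i.succ : L) = ∑ m : Fin d, Ubar m.succ i.succ • b m.succ := by
    intro i
    rw [hU, Fin.sum_univ_succ]
    simp [hU0]
  have hy0 : (yb 0 : L) = Ubar 0 0 • b 0 + ∑ k : Fin d, Ubar k.succ 0 • b k.succ := by
    rw [hU, Fin.sum_univ_succ]
  have hmemC' : ∀ (z : Fin d → ℤ_[p]),
      (∑ m : Fin d, (∑ j : Fin d, Ubar m.succ j.succ * z j) • b m.succ) ∈ M := by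
    intro z
    have he : (∑ m : Fin d, (∑ j : Fin d, Ubar m.succ j.succ * z j) • b m.succ)
        = ∑ j : Fin d, z j • (yb j.succ : L) := by
      apply b.repr.injective
      ext α
      have hrhs : b.repr (∑ j : Fin d, z j • (yb j.succ : L)) α
          = ∑ j : Fin d, z j * Ubar α j.succ := by
        simp [map_sum, hrep]
      induction α using Fin.cases with
      | zero => rw [hrepb0, hrhs]; simp [hU0]
      | succ m =>
          rw [hrepbs, hrhs]
          exact Finset.sum_congr rfl fun j _ => mul_comm _ _
    rw [he]
    exact Submodule.sum_mem _ fun j _ => Submodule.smul_mem _ _ (SetLike.coe_mem _)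
  -- bracket computations
  have habY : ∀ i j : Fin d, ⁅(yb i.succ : L), (yb j.succ : L)⁆ = 0 := by
    intro i j
    rw [hysucc i, hysucc j, my_sum_lie]
    apply Finset.sum_eq_zero
    intro k _
    rw [smul_lie, my_lie_sum]
    simp [lie_smul, hab]
  have hbrak0 : ∀ i : Fin d, ⁅(yb 0 : L), (yb i.succ : L)⁆
      = ∑ m : Fin d, (Ubar 0 0 * ∑ j : Fin d, A m j * Ubar j.succ i.succ) • b m.succ := by
    intro i
    rw [hy0, hysucc i, add_lie]
    have hz : ⁅∑ k : Fin d, Ubar k.succ 0 • b k.succ,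
        ∑ m : Fin d, Ubar m.succ i.succ • b m.succ⁆ = 0 := by
      rw [my_sum_lie]
      apply Finset.sum_eq_zero
      intro k _
      rw [smul_lie, my_lie_sum]
      simp [lie_smul, hab]
    rw [hz, add_zero, smul_lie, my_lie_sum]
    simp only [lie_smul, h0, Finset.smul_sum, smul_smul]
    rw [Finset.sum_comm]
    refine Finset.sum_congr rfl fun m _ => ?_
    rw [← Finset.sum_smul]
    congr 1
    rw [Finset.mul_sum]
    exact Finset.sum_congr rfl fun j _ => by ring
  have hsumB : ∀ (B' : Matrix (Fin d) (Fin d) ℤ_[p]) (i : Fin d),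
      (∑ l : Fin d, B' l i • (yb l.succ : L))
        = ∑ m : Fin d, (∑ l : Fin d, Ubar m.succ l.succ * B' l i) • b m.succ := by
    intro B' i
    simp only [hysucc, Finset.smul_sum, smul_smul]
    rw [Finset.sum_comm]
    refine Finset.sum_congr rfl fun m _ => ?_
    rw [← Finset.sum_smul]
    congr 1
    exact Finset.sum_congr rfl fun l _ => by ring
  have hgood : ∀ (B' : Matrix (Fin d) (Fin d) ℤ_[p]), (B'.map fun r => (r : ℚ_[p])) = B →
      ∀ i : Fin d, ⁅(yb 0 : L), (yb i.succ : L)⁆ = ∑ l : Fin d, B' l i • (yb l.succ : L) := by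
    intro B' hB' i
    rw [hbrak0 i, hsumB B' i]
    exact Finset.sum_congr rfl fun m _ => by rw [hcast B' hB' m i]
  refine ⟨⟨?_, ?_⟩, fun B' hB' => ⟨habY, hgood B' hB'⟩⟩
  · -- forward direction
    intro hsub i j
    obtain ⟨z, hz⟩ := hmemC (fun m => Ubar 0 0 * ∑ t : Fin d, A m t * Ubar t.succ j.succ)
      (by rw [← hbrak0 j]
          exact hsub _ (SetLike.coe_mem (yb 0)) _ (SetLike.coe_mem (yb j.succ)))
    refine ⟨z i, ?_⟩
    have hveq : (fun l => (z l : ℚ_[p])) = fun l => B l j := by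
      apply hVecInj
      funext m
      have e1 : (Matrix.of fun i j : Fin d => (Ubar i.succ j.succ : ℚ_[p])).mulVec
          (fun l => (z l : ℚ_[p])) m
          = ∑ l : Fin d, (Ubar m.succ l.succ : ℚ_[p]) * (z l : ℚ_[p]) := by
        simp [Matrix.mulVec, dotProduct]
      have e2 : (Matrix.of fun i j : Fin d => (Ubar i.succ j.succ : ℚ_[p])).mulVec
          (fun l => B l j) m
          = ∑ l : Fin d, (Ubar m.succ l.succ : ℚ_[p]) * B l j := by
        simp [Matrix.mulVec, dotProduct]
      rw [e1, e2, hkey' m j]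
      have e3 : ∑ l : Fin d, (Ubar m.succ l.succ : ℚ_[p]) * (z l : ℚ_[p])
          = ((∑ l : Fin d, Ubar m.succ l.succ * z l : ℤ_[p]) : ℚ_[p]) := by
        rw [hcoesum]
        simp
      rw [e3, hz m]
      simp [hcoesum]
    exact congrFun hveq i
  · -- backward direction
    intro h u hu v hv
    set B' : Matrix (Fin d) (Fin d) ℤ_[p] := Matrix.of fun i j => (h i j).choose with hB'def
    have hB' : (B'.map fun r => (r : ℚ_[p])) = B := by
      ext i j
      exact (h i j).choose_spec
    have hyMem : ∀ α β : Fin (d+1), ⁅(yb α : L), (yb β : L)⁆ ∈ M := by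
      have h0s : ∀ j : Fin d, ⁅(yb 0 : L), (yb j.succ : L)⁆ ∈ M := by
        intro j
        rw [hgood B' hB' j]
        exact Submodule.sum_mem _ fun l _ => Submodule.smul_mem _ _ (SetLike.coe_mem _)
      intro α β
      induction α using Fin.cases with
      | zero =>
          induction β using Fin.cases with
          | zero => simp
          | succ j => exact h0s j
      | succ i =>
          induction β using Fin.cases with
          | zero =>
              rw [← lie_skew]
              exact Submodule.neg_mem _ (h0s i)
          | succ j =>
              rw [habY i j]
              exact Submodule.zero_mem _
    obtain ⟨c, rfl⟩ := (hmem_iff u).1 hu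
    obtain ⟨c', rfl⟩ := (hmem_iff v).1 hv
    rw [my_sum_lie]
    refine Submodule.sum_mem _ fun α _ => ?_
    rw [smul_lie]
    refine Submodule.smul_mem _ _ ?_
    rw [my_lie_sum]
    refine Submodule.sum_mem _ fun β _ => ?_
    rw [lie_smul]
    exact Submodule.smul_mem _ _ (hyMem α β)
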